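/- There exists an infinite sequence of k-uniform edge-minimal hypertrees (k ≥ 3) with n_m vertices and e_m edges where n_m is strictly increasing and e_m ∼ (1/(k−1))·C(n_m, 2) as m → ∞. Concretely, for m divisible by k−1, the hypergraph H_m on the (l+1)×m grid of vertices (l = C(m−1, k−2)), with edges {v_{ij}, v_{r s_1}, …, v_{r s_{k−1}}} for i < r and {s_1,…,s_{k−1}} a class of the i-th parallel class B_i of a Baranyai 1-factorization of the complete (k−1)-uniform hypergraph on [m], is an edge-minimal 2-hypertree with C(l+1, 2)·m²/(k−1) edges. -/

import Mathlib

variable {V : Type*} [DecidableEq V]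

/-- The list of consecutive `k`-windows (as finsets) of a vertex sequence. -/
def windows (k : ℕ) (w : List V) : List (Finset V) :=
  (List.range (w.length + 1 - k)).map fun i => ((w.drop i).take k).toFinset

/-- `w` is the vertex sequence of a chain: `v₁ ≠ v_l`, each window is a `k`-set,
and the `l - k + 1` window edges are pairwise distinct. -/
def IsChainSeq (k : ℕ) (w : List V) : Prop :=
  k ≤ w.length ∧ w.head? ≠ w.getLast? ∧
  (∀ e ∈ windows k w, e.card = k) ∧ (windows k w).Nodup

/-- `w` is the vertex sequence of a semicycle: `v₁ = v_l`, each window is a `k`-set,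
and the `l - k + 1` window edges are pairwise distinct. -/
def IsSemicycleSeq (k : ℕ) (w : List V) : Prop :=
  k ≤ w.length ∧ w.head? = w.getLast? ∧
  (∀ e ∈ windows k w, e.card = k) ∧ (windows k w).Nodup

/-- A hypergraph with edge set `E` contains no semicycle as a subhypergraph. -/
def SemicycleFree (k : ℕ) (E : Finset (Finset V)) : Prop :=
  ¬ ∃ w : List V, IsSemicycleSeq k w ∧ ∀ e ∈ windows k w, e ∈ E

/-- Every two distinct vertices of `S` lie in a common chain subhypergraph of `E`. -/
def ChainConnOn (k : ℕ) (S : Finset V) (E : Finset (Finset V)) : Prop :=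
  ∀ u ∈ S, ∀ v ∈ S, u ≠ v →
    ∃ w : List V, IsChainSeq k w ∧ (∀ e ∈ windows k w, e ∈ E) ∧ u ∈ w ∧ v ∈ w

/-- Chain-connectedness on the whole (finite) vertex type. -/
def ChainConn [Fintype V] (k : ℕ) (E : Finset (Finset V)) : Prop :=
  ChainConnOn k Finset.univ E

/-- A `k`-uniform hypertree: chain-connected and semicycle-free. -/
def IsHypertree [Fintype V] (k : ℕ) (E : Finset (Finset V)) : Prop :=
  (∀ e ∈ E, e.card = k) ∧ ChainConn k E ∧ SemicycleFree k E

/-- Every chain subhypergraph of `E` has length (number of edges) at most `l`. -/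
def ChainsLenLE (k l : ℕ) (E : Finset (Finset V)) : Prop :=
  ∀ w : List V, IsChainSeq k w → (∀ e ∈ windows k w, e ∈ E) →
    w.length + 1 - k ≤ l

/-- An `l`-hypertree: a hypertree all of whose chains have length at most `l`. -/
def IsLHypertree [Fintype V] (k l : ℕ) (E : Finset (Finset V)) : Prop :=
  IsHypertree k E ∧ ChainsLenLE k l E

/-- Edge-minimal: deleting any edge destroys chain-connectedness. -/
def EdgeMinimal [Fintype V] (k : ℕ) (E : Finset (Finset V)) : Prop :=
  ∀ e ∈ E, ¬ ChainConn k (E.erase e)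

/-- Edge-maximal: adding any new `k`-set as an edge creates a semicycle. -/
def EdgeMaximal [Fintype V] (k : ℕ) (E : Finset (Finset V)) : Prop :=
  ∀ s : Finset V, s.card = k → s ∉ E → ¬ SemicycleFree k (insert s E)

/-- `S` is a (tight) star subhypergraph of `E`: a nonempty set of edges of `E`
all containing a common `(k-1)`-set kernel. -/
def IsStarSub (k : ℕ) (E S : Finset (Finset V)) : Prop :=
  S ⊆ E ∧ S.Nonempty ∧ ∃ K : Finset V, K.card = k - 1 ∧ ∀ e ∈ S, K ⊆ e

/-- `S` is a maximal star subhypergraph of `E`. -/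
def IsMaxStar (k : ℕ) (E S : Finset (Finset V)) : Prop :=
  IsStarSub k E S ∧ ∀ T, IsStarSub k E T → S ⊆ T → S = T

set_option linter.unusedSectionVars false
set_option linter.unusedVariables false
set_option maxHeartbeats 1000000

namespace S14



lemma length_windows (k : ℕ) (w : List V) : (windows k w).length = w.length + 1 - k := by
  simp [windows]

lemma mem_windows_iff {k : ℕ} {w : List V} {e : Finset V} :
    e ∈ windows k w ↔ ∃ i < w.length + 1 - k, ((w.drop i).take k).toFinset = e := by
  simp [windows, List.mem_map, List.mem_range, eq_comm]

lemma windows_getElem? {k : ℕ} {w : List V} (i : ℕ) (h : i < w.length + 1 - k) :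
    (windows k w)[i]? = some ((w.drop i).take k).toFinset := by
  simp [windows, List.getElem?_map, List.getElem?_range h]

lemma window_mem_windows {k : ℕ} {w : List V} (i : ℕ) (h : i < w.length + 1 - k) :
    ((w.drop i).take k).toFinset ∈ windows k w := by
  rw [mem_windows_iff]; exact ⟨i, h, rfl⟩

lemma nodup_of_card_toFinset {l : List V} (h : l.toFinset.card = l.length) : l.Nodup := by
  rw [List.card_toFinset] at h
  have hs : l.dedup.Sublist l := List.dedup_sublist l
  have := hs.eq_of_length h
  rw [← this]; exact l.nodup_dedup

lemma window_list_nodup {k : ℕ} {w : List V} (i : ℕ) (h : i + k ≤ w.length)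
    (hcard : ((w.drop i).take k).toFinset.card = k) : ((w.drop i).take k).Nodup := by
  apply nodup_of_card_toFinset
  rw [hcard, List.length_take, List.length_drop]
  omega

lemma window_list_getElem? {k : ℕ} {w : List V} (i j : ℕ) (hj : j < k) :
    ((w.drop i).take k)[j]? = w[i + j]? := by
  rw [List.getElem?_take, if_pos hj, List.getElem?_drop]

lemma mem_window_list {k : ℕ} {w : List V} (i j : ℕ) (hj : j < k) (h : i + j < w.length) :
    w[i + j]'(h) ∈ (w.drop i).take k := by
  rw [List.mem_iff_getElem?]
  exact ⟨j, by rw [window_list_getElem? i j hj, List.getElem?_eq_getElem h]⟩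

/-- Every member of `w` lies in some window. -/
lemma mem_window_of_mem {k : ℕ} {w : List V} (hk : k ≤ w.length) (hk0 : 0 < k)
    {u : V} (hu : u ∈ w) : ∃ i < w.length + 1 - k, u ∈ ((w.drop i).take k).toFinset := by
  obtain ⟨j, hj, rfl⟩ := List.getElem_of_mem hu
  rcases le_or_gt (j + k) w.length with hcase | hcase
  · refine ⟨j, by omega, ?_⟩
    rw [List.mem_toFinset]
    have := mem_window_list (k := k) (w := w) j 0 (by omega) (by omega)
    simpa using this
  · refine ⟨w.length - k, by omega, ?_⟩
    rw [List.mem_toFinset, List.mem_iff_getElem?]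
    refine ⟨j - (w.length - k), ?_⟩
    rw [window_list_getElem? _ _ (by omega)]
    have hidx : w.length - k + (j - (w.length - k)) = j := by omega
    rw [hidx, List.getElem?_eq_getElem hj]


lemma window_eq0 {k : ℕ} {w : List V} (i : ℕ) (hk : 1 ≤ k) (h : i + k ≤ w.length) :
    ((w.drop i).take k).toFinset
      = insert (w[i]'(by omega)) ((w.drop (i+1)).take (k-1)).toFinset := by
  have hdrop : w.drop i = w[i]'(by omega) :: w.drop (i+1) :=
    List.drop_eq_getElem_cons (by omega)
  obtain ⟨k', hk'⟩ : ∃ k', k = k' + 1 := ⟨k - 1, by omega⟩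
  subst hk'
  simp only [hdrop, List.take_succ_cons, List.toFinset_cons, Nat.add_sub_cancel]

lemma window_eq1 {k : ℕ} {w : List V} (i : ℕ) (hk : 1 ≤ k) (h : i + k + 1 ≤ w.length) :
    ((w.drop (i+1)).take k).toFinset
      = insert (w[i+k]'(by omega)) ((w.drop (i+1)).take (k-1)).toFinset := by
  obtain ⟨k', hk'⟩ : ∃ k', k = k' + 1 := ⟨k - 1, by omega⟩
  subst hk'
  have hgd : (w.drop (i+1))[k']? = some (w[i+(k'+1)]'(by omega)) := by
    rw [List.getElem?_drop]
    have hidx : i + 1 + k' = i + (k' + 1) := by omega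
    rw [hidx, List.getElem?_eq_getElem (by omega)]
  simp only [Nat.add_sub_cancel]
  rw [List.take_succ, List.toFinset_append, hgd]
  ext; simp [or_comm]

/-- Window step structure. -/
lemma window_step {k : ℕ} {w : List V} (hk : 2 ≤ k) (i : ℕ) (h : i + k + 1 ≤ w.length)
    (hc0 : ((w.drop i).take k).toFinset.card = k)
    (hc1 : ((w.drop (i+1)).take k).toFinset.card = k) :
    ∃ T : Finset V,
      ((w.drop i).take k).toFinset = insert (w[i]'(by omega)) T ∧
      ((w.drop (i+1)).take k).toFinset = insert (w[i+k]'(by omega)) T ∧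
      (w[i]'(by omega)) ∉ T ∧ (w[i+k]'(by omega)) ∉ T ∧ (w[i+1]'(by omega)) ∈ T ∧
      (w[i]'(by omega)) ≠ (w[i+1]'(by omega)) := by
  have e0 := window_eq0 (k := k) (w := w) i (by omega) (by omega)
  have e1 := window_eq1 (k := k) (w := w) i (by omega) (by omega)
  have hTcard : ((w.drop (i+1)).take (k-1)).toFinset.card ≤ k - 1 :=
    le_trans (List.toFinset_card_le _)
      (by rw [List.length_take, List.length_drop]; omega)
  have h0T : (w[i]'(by omega)) ∉ ((w.drop (i+1)).take (k-1)).toFinset := by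
    intro hmem
    rw [e0, Finset.insert_eq_self.2 hmem] at hc0
    omega
  have h1T : (w[i+k]'(by omega)) ∉ ((w.drop (i+1)).take (k-1)).toFinset := by
    intro hmem
    rw [e1, Finset.insert_eq_self.2 hmem] at hc1
    omega
  have hmem1 : (w[i+1]'(by omega)) ∈ ((w.drop (i+1)).take (k-1)).toFinset := by
    rw [List.mem_toFinset, List.mem_iff_getElem?]
    refine ⟨0, ?_⟩
    rw [window_list_getElem? _ _ (by omega)]
    simp only [Nat.add_zero]
    rw [List.getElem?_eq_getElem (by omega)]
  have hne : (w[i]'(by omega)) ≠ (w[i+1]'(by omega)) := by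
    intro hcontr
    have : (w[i+1]'(by omega)) ∈ insert (w[i]'(by omega))
        ((w.drop (i+1)).take (k-1)).toFinset := Finset.mem_insert_of_mem hmem1
    rw [← hcontr] at hmem1
    exact h0T hmem1
  exact ⟨_, e0, e1, h0T, h1T, hmem1, hne⟩



abbrev Rr (M : ℕ) : ℕ := 2*M+3

instance instNeZeroRr (M : ℕ) : NeZero (Rr M) := ⟨by show 2*M+3 ≠ 0; omega⟩

abbrev Vx (k M : ℕ) := ZMod (Rr M) × ZMod (Rr M) × Fin (k-1)

/-- the tournament on rows -/
def Adj (M : ℕ) (i j : ZMod (Rr M)) : Prop := 1 ≤ (j - i).val ∧ (j - i).val ≤ M+1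

lemma adj_irrefl {M : ℕ} {i j : ZMod (Rr M)} (h : Adj M i j) : i ≠ j := by
  obtain ⟨h1, h2⟩ := h
  rintro rfl
  rw [sub_self, ZMod.val_zero] at h1
  omega

lemma sub_ne_zero_of_adj {M : ℕ} {i j : ZMod (Rr M)} (h : Adj M i j) : j - i ≠ 0 :=
  sub_ne_zero_of_ne (Ne.symm (adj_irrefl h))

lemma adj_asymm {M : ℕ} {i j : ZMod (Rr M)} (h : Adj M i j) (h' : Adj M j i) : False := by
  have h1 : (j - i) ≠ 0 := sub_ne_zero_of_adj h
  obtain ⟨ha, hb⟩ := h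
  obtain ⟨hc, hd⟩ := h'
  have h2 : (i - j) = -(j - i) := by ring
  have h3 : (i - j).val = Rr M - (j - i).val := by
    rw [h2, ZMod.neg_val, if_neg h1]
  rw [h3] at hc hd
  have hlt : (j - i).val < Rr M := ZMod.val_lt _
  have : (2:ℕ)*M+3 = Rr M := rfl
  omega

lemma adj_total {M : ℕ} {i j : ZMod (Rr M)} (h : i ≠ j) : Adj M i j ∨ Adj M j i := by
  have h1 : (j - i) ≠ 0 := sub_ne_zero_of_ne (Ne.symm h)
  have h1' : 1 ≤ (j - i).val := by
    rcases Nat.eq_zero_or_pos (j - i).val with h0 | h0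
    · exact absurd ((ZMod.val_eq_zero (j - i)).mp h0) h1
    · omega
  have h3 : (i - j).val = Rr M - (j - i).val := by
    have h2 : (i - j) = -(j - i) := by ring
    rw [h2, ZMod.neg_val, if_neg h1]
  have hlt : (j - i).val < Rr M := ZMod.val_lt _
  have hR : (2:ℕ)*M+3 = Rr M := rfl
  rcases le_or_gt (j - i).val (M+1) with hc | hc
  · exact Or.inl ⟨h1', hc⟩
  · refine Or.inr ⟨?_, ?_⟩ <;> rw [h3] <;> omega

lemma adj_succ (M : ℕ) (i : ZMod (Rr M)) : Adj M i (i + 1) := by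
  have h1 : i + 1 - i = 1 := by ring
  have h2 : (1 : ZMod (Rr M)).val = 1 := by
    have : ((1:ℕ) : ZMod (Rr M)).val = 1 % Rr M := ZMod.val_natCast _ 1
    simpa using this
  constructor <;> rw [h1, h2] <;> omega

variable (k M : ℕ)

/-- a block: `k-1` points in row `r`, transversal of slope `c` based at `x` -/
def blk (r c x : ZMod (Rr M)) : Finset (Vx k M) :=
  Finset.univ.image fun a : Fin (k-1) => (r, x + ((a : ℕ) : ZMod (Rr M)) * c, a)

lemma mem_blk {k M : ℕ} {r c x : ZMod (Rr M)} {v : Vx k M} :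
    v ∈ blk k M r c x ↔ v.1 = r ∧ v.2.1 = x + ((v.2.2 : ℕ) : ZMod (Rr M)) * c := by
  simp only [blk, Finset.mem_image, Finset.mem_univ, true_and]
  constructor
  · rintro ⟨a, ha⟩
    rw [← ha]
    exact ⟨rfl, rfl⟩
  · rintro ⟨h1, h2⟩
    exact ⟨v.2.2, by rw [← h1, ← h2]⟩

lemma blk_row {k M : ℕ} {r c x : ZMod (Rr M)} {v : Vx k M} (h : v ∈ blk k M r c x) :
    v.1 = r := (mem_blk.mp h).1

lemma card_blk (hk : 3 ≤ k) {r c x : ZMod (Rr M)} : (blk k M r c x).card = k - 1 := by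
  rw [blk, Finset.card_image_of_injective _ (fun a b h => by
    have := congrArg (fun v : Vx k M => v.2.2) h
    exact this), Finset.card_univ, Fintype.card_fin]

lemma pt0_mem {k M : ℕ} (hk : 3 ≤ k) (r c x : ZMod (Rr M)) :
    (r, x, (⟨0, by omega⟩ : Fin (k-1))) ∈ blk k M r c x := by
  rw [mem_blk]
  exact ⟨rfl, by simp⟩

lemma pt1_mem {k M : ℕ} (hk : 3 ≤ k) (r c x : ZMod (Rr M)) :
    (r, x + c, (⟨1, by omega⟩ : Fin (k-1))) ∈ blk k M r c x := by
  rw [mem_blk]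
  exact ⟨rfl, by simp⟩

lemma pts_ne {k M : ℕ} (hk : 3 ≤ k) (r c x : ZMod (Rr M)) :
    ((r, x, (⟨0, by omega⟩ : Fin (k-1))) : Vx k M) ≠ (r, x + c, ⟨1, by omega⟩) := by
  intro h
  have := congrArg (fun v : Vx k M => (v.2.2 : ℕ)) h
  simpa using this

/-- two distinct elements of a block, not equal to a given `a` : at least one survives -/
lemma exists_mem_blk_ne {k M : ℕ} (hk : 3 ≤ k) (r c x : ZMod (Rr M)) (a : Vx k M) :
    ∃ p ∈ blk k M r c x, p ≠ a ∧ p.1 = r := by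
  by_cases h : a = (r, x, (⟨0, by omega⟩ : Fin (k-1)))
  · refine ⟨(r, x + c, ⟨1, by omega⟩), pt1_mem hk r c x, ?_, rfl⟩
    rw [h]
    exact fun hh => (pts_ne hk r c x) hh.symm
  · exact ⟨(r, x, ⟨0, by omega⟩), pt0_mem hk r c x, fun hh => h hh.symm, rfl⟩

/-- same-slope blocks sharing a point are equal (bases agree) -/
lemma blk_base_eq {k M : ℕ} {r c x x' : ZMod (Rr M)} {v : Vx k M}
    (h : v ∈ blk k M r c x) (h' : v ∈ blk k M r c x') : x = x' := by
  obtain ⟨-, h2⟩ := mem_blk.mp h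
  obtain ⟨-, h2'⟩ := mem_blk.mp h'
  have := h2.symm.trans h2'
  exact add_right_cancel this

/-- an edge: apex `u` together with a block in row `r` with slope `r - u.1` -/
def edg (u : Vx k M) (r x : ZMod (Rr M)) : Finset (Vx k M) :=
  insert u (blk k M r (r - u.1) x)

lemma apex_not_mem_blk {k M : ℕ} {u : Vx k M} {r c x : ZMod (Rr M)} (h : u.1 ≠ r) :
    u ∉ blk k M r c x := fun hmem => h (blk_row hmem)

lemma card_edg (hk : 3 ≤ k) {u : Vx k M} {r x : ZMod (Rr M)} (h : Adj M u.1 r) :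
    (edg k M u r x).card = k := by
  rw [edg, Finset.card_insert_of_notMem (apex_not_mem_blk (adj_irrefl h)), card_blk k M hk]
  omega

def PP : Finset (Vx k M × ℕ × ZMod (Rr M)) :=
  Finset.univ ×ˢ (Finset.Icc 1 (M+1) ×ˢ Finset.univ)

def EE : Finset (Finset (Vx k M)) :=
  (PP k M).image fun p => edg k M p.1 (p.1.1 + ((p.2.1 : ℕ) : ZMod (Rr M))) p.2.2

lemma adj_iff {M : ℕ} {i r : ZMod (Rr M)} :
    Adj M i r ↔ ∃ d : ℕ, 1 ≤ d ∧ d ≤ M+1 ∧ r = i + (d : ZMod (Rr M)) := by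
  constructor
  · intro h
    refine ⟨(r - i).val, h.1, h.2, ?_⟩
    rw [ZMod.natCast_rightInverse (r - i)]
    ring
  · rintro ⟨d, h1, h2, rfl⟩
    have : i + (d : ZMod (Rr M)) - i = (d : ZMod (Rr M)) := by ring
    rw [Adj, this, ZMod.val_natCast]
    have : d % Rr M = d := Nat.mod_eq_of_lt (by show d < 2*M+3; omega)
    omega

lemma mem_EE {k M : ℕ} {e : Finset (Vx k M)} :
    e ∈ EE k M ↔ ∃ u : Vx k M, ∃ r x : ZMod (Rr M), Adj M u.1 r ∧ e = edg k M u r x := by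
  rw [EE, Finset.mem_image]
  constructor
  · rintro ⟨⟨u, d, x⟩, hp, rfl⟩
    rw [PP, Finset.mem_product] at hp
    have hd := hp.2
    rw [Finset.mem_product, Finset.mem_Icc] at hd
    exact ⟨u, u.1 + ((d:ℕ) : ZMod (Rr M)), x,
      adj_iff.mpr ⟨d, hd.1.1, hd.1.2, rfl⟩, rfl⟩
  · rintro ⟨u, r, x, hadj, rfl⟩
    obtain ⟨d, h1, h2, rfl⟩ := adj_iff.mp hadj
    refine ⟨(u, d, x), ?_, rfl⟩
    rw [PP, Finset.mem_product, Finset.mem_product, Finset.mem_Icc]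
    exact ⟨Finset.mem_univ _, ⟨h1, h2⟩, Finset.mem_univ _⟩



lemma apex_not_mem {k M : ℕ} {u : Vx k M} {r x : ZMod (Rr M)} (h : Adj M u.1 r) :
    u ∉ blk k M r (r - u.1) x := apex_not_mem_blk (adj_irrefl h)

lemma mem_edg {k M : ℕ} {u v : Vx k M} {r x : ZMod (Rr M)} :
    v ∈ edg k M u r x ↔ v = u ∨ v ∈ blk k M r (r - u.1) x := Finset.mem_insert

lemma erase_edg {k M : ℕ} {u : Vx k M} {r x : ZMod (Rr M)} (h : Adj M u.1 r) :
    (edg k M u r x).erase u = blk k M r (r - u.1) x := by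
  rw [edg, Finset.erase_insert (apex_not_mem h)]

/-- Key structural lemma: in a window step between two edges, the leaving element is
the first apex, the entering element is the second apex, and the kernels coincide. -/
lemma L1 {k M : ℕ} (hk : 3 ≤ k) {u1 u2 : Vx k M} {r1 r2 x1 x2 : ZMod (Rr M)}
    (h1 : Adj M u1.1 r1) (h2 : Adj M u2.1 r2) {a b : Vx k M}
    (ha : a ∈ edg k M u1 r1 x1) (hb : b ∉ edg k M u1 r1 x1)
    (heq : edg k M u2 r2 x2 = insert b ((edg k M u1 r1 x1).erase a)) :
    a = u1 ∧ b = u2 ∧ r1 = r2 ∧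
    blk k M r1 (r1 - u1.1) x1 = blk k M r2 (r2 - u2.1) x2 ∧ u1.1 = u2.1 ∧ u1 ≠ u2 := by
  have hu1r : u1.1 ≠ r1 := adj_irrefl h1
  have hu2r : u2.1 ≠ r2 := adj_irrefl h2
  have hu1K : u1 ∉ blk k M r1 (r1 - u1.1) x1 := apex_not_mem h1
  have hu2K : u2 ∉ blk k M r2 (r2 - u2.1) x2 := apex_not_mem h2
  have hsub : (edg k M u1 r1 x1).erase a ⊆ edg k M u2 r2 x2 := by
    rw [heq]; exact Finset.subset_insert _ _
  have haK1 : a ≠ u1 → a ∈ blk k M r1 (r1 - u1.1) x1 := by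
    intro hne
    rcases mem_edg.mp ha with h | h
    · exact absurd h hne
    · exact h
  have hanote2 : a ∉ edg k M u2 r2 x2 := by
    rw [heq]
    intro hmem
    rcases Finset.mem_insert.mp hmem with h | h
    · exact hb (h ▸ ha)
    · exact (Finset.notMem_erase a _) h
  -- Step 1 : r1 = r2
  have hrr : r1 = r2 := by
    by_contra hr
    rcases eq_or_ne a u1 with hau | hau
    · have hK1sub : blk k M r1 (r1 - u1.1) x1 ⊆ edg k M u2 r2 x2 := by
        rw [hau, erase_edg h1] at hsub
        exact hsub
      have hp0 := hK1sub (pt0_mem hk r1 (r1 - u1.1) x1)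
      have hp1 := hK1sub (pt1_mem hk r1 (r1 - u1.1) x1)
      have hp0' : ((r1, x1, (⟨0, by omega⟩ : Fin (k-1))) : Vx k M) = u2 := by
        rcases mem_edg.mp hp0 with h | h
        · exact h
        · exact absurd (blk_row h) hr
      have hp1' : ((r1, x1 + (r1 - u1.1), (⟨1, by omega⟩ : Fin (k-1))) : Vx k M) = u2 := by
        rcases mem_edg.mp hp1 with h | h
        · exact h
        · exact absurd (blk_row h) hr
      exact pts_ne hk r1 (r1 - u1.1) x1 (hp0'.trans hp1'.symm)
    · have haK := haK1 hau
      have hu1e2 : u1 ∈ edg k M u2 r2 x2 :=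
        hsub (Finset.mem_erase.mpr ⟨fun h => hau h.symm, Finset.mem_insert_self _ _⟩)
      obtain ⟨p, hpK, hpa, hpr⟩ := exists_mem_blk_ne hk r1 (r1 - u1.1) x1 a
      have hpe2 : p ∈ edg k M u2 r2 x2 :=
        hsub (Finset.mem_erase.mpr ⟨hpa, Finset.mem_insert_of_mem hpK⟩)
      have hpu2 : p = u2 := by
        rcases mem_edg.mp hpe2 with h | h
        · exact h
        · exact absurd (hpr ▸ blk_row h) hr
      have hu2row : u2.1 = r1 := by rw [← hpu2, hpr]
      rcases mem_edg.mp hu1e2 with h | h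
      · rw [h, hu2row] at hu1r; exact hu1r rfl
      · have hu1row : u1.1 = r2 := blk_row h
        exact adj_asymm (hu1row ▸ h1) (hu2row ▸ h2)
  -- Step 2 : a = u1
  have hau1 : a = u1 := by
    by_contra hau
    have haK := haK1 hau
    have hu1e2 : u1 ∈ edg k M u2 r2 x2 :=
      hsub (Finset.mem_erase.mpr ⟨fun h => hau h.symm, Finset.mem_insert_self _ _⟩)
    have hu1u2 : u1 = u2 := by
      rcases mem_edg.mp hu1e2 with h | h
      · exact h
      · exact absurd (blk_row h) (hrr ▸ hu1r)
    obtain ⟨p, hpK, hpa, hpr⟩ := exists_mem_blk_ne hk r1 (r1 - u1.1) x1 a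
    have hpe2 : p ∈ edg k M u2 r2 x2 :=
      hsub (Finset.mem_erase.mpr ⟨hpa, Finset.mem_insert_of_mem hpK⟩)
    have hpK2 : p ∈ blk k M r2 (r2 - u2.1) x2 := by
      rcases mem_edg.mp hpe2 with h | h
      · rw [h, ← hu1u2] at hpr; exact absurd hpr hu1r
      · exact h
    have hpK2' : p ∈ blk k M r1 (r1 - u1.1) x2 := by
      have hslope : r2 - u2.1 = r1 - u1.1 := by rw [← hrr, ← hu1u2]
      rw [hslope, ← hrr] at hpK2
      exact hpK2
    have hbase : x1 = x2 := blk_base_eq hpK hpK2'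
    have : a ∈ blk k M r2 (r2 - u2.1) x2 := by
      have hslope : r2 - u2.1 = r1 - u1.1 := by rw [← hrr, ← hu1u2]
      rw [hslope, ← hrr, ← hbase]
      exact haK
    exact hanote2 (Finset.mem_insert_of_mem this)
  -- Step 3 : K1 = K2
  have hKsub : blk k M r1 (r1 - u1.1) x1 ⊆ blk k M r2 (r2 - u2.1) x2 := by
    intro p hp
    have hpe2 : p ∈ edg k M u2 r2 x2 := hsub (by
      rw [hau1, erase_edg h1]
      exact hp)
    rcases mem_edg.mp hpe2 with h | h
    · rw [h] at hp
      exact absurd (blk_row hp) (hrr ▸ hu2r)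
    · exact h
  have hKK : blk k M r1 (r1 - u1.1) x1 = blk k M r2 (r2 - u2.1) x2 :=
    Finset.eq_of_subset_of_card_le hKsub
      (by rw [card_blk k M hk, card_blk k M hk])
  -- Step 4 : bases and apex rows equal
  have hx12 : x1 = x2 := by
    have h0 : ((r1, x1, (⟨0, by omega⟩ : Fin (k-1))) : Vx k M) ∈ blk k M r2 (r2 - u2.1) x2 :=
      hKK ▸ pt0_mem hk r1 (r1 - u1.1) x1
    obtain ⟨-, h2⟩ := mem_blk.mp h0
    simpa using h2
  have hcc : r1 - u1.1 = r2 - u2.1 := by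
    have h0 : ((r1, x1 + (r1 - u1.1), (⟨1, by omega⟩ : Fin (k-1))) : Vx k M)
        ∈ blk k M r2 (r2 - u2.1) x2 :=
      hKK ▸ pt1_mem hk r1 (r1 - u1.1) x1
    obtain ⟨-, h2⟩ := mem_blk.mp h0
    simp only [Nat.cast_one, one_mul] at h2
    rw [hx12] at h2
    exact add_left_cancel h2
  have hrow : u1.1 = u2.1 := by
    have := hcc
    rw [hrr] at this
    have h2 : r2 - (r2 - u1.1) = r2 - (r2 - u2.1) := by rw [this]
    simpa using h2
  -- Step 5 : b = u2
  have hbu2 : b = u2 := by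
    have hbe2 : b ∈ edg k M u2 r2 x2 := by rw [heq]; exact Finset.mem_insert_self _ _
    rcases mem_edg.mp hbe2 with h | h
    · exact h
    · rw [← hKK] at h
      exact absurd (Finset.mem_insert_of_mem h : b ∈ edg k M u1 r1 x1) hb
  have hune : u1 ≠ u2 := by
    rintro rfl
    rw [hbu2] at hb
    exact hb (Finset.mem_insert_self _ _)
  exact ⟨hau1, hbu2, hrr, hKK, hrow, hune⟩

/-- Injectivity of the edge construction. -/
lemma edg_inj {k M : ℕ} (hk : 3 ≤ k) {u1 u2 : Vx k M} {r1 r2 x1 x2 : ZMod (Rr M)}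
    (h1 : Adj M u1.1 r1) (h2 : Adj M u2.1 r2)
    (heq : edg k M u1 r1 x1 = edg k M u2 r2 x2) :
    u1 = u2 ∧ r1 = r2 ∧ x1 = x2 := by
  have hu1r : u1.1 ≠ r1 := adj_irrefl h1
  have hu2r : u2.1 ≠ r2 := adj_irrefl h2
  have hrr : r1 = r2 := by
    by_contra hr
    have hp0 : ((r1, x1, (⟨0, by omega⟩ : Fin (k-1))) : Vx k M) ∈ edg k M u2 r2 x2 :=
      heq ▸ Finset.mem_insert_of_mem (pt0_mem hk r1 (r1 - u1.1) x1)
    have hp1 : ((r1, x1 + (r1 - u1.1), (⟨1, by omega⟩ : Fin (k-1))) : Vx k M)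
        ∈ edg k M u2 r2 x2 :=
      heq ▸ Finset.mem_insert_of_mem (pt1_mem hk r1 (r1 - u1.1) x1)
    have hp0' : ((r1, x1, (⟨0, by omega⟩ : Fin (k-1))) : Vx k M) = u2 := by
      rcases mem_edg.mp hp0 with h | h
      · exact h
      · exact absurd (blk_row h) hr
    have hp1' : ((r1, x1 + (r1 - u1.1), (⟨1, by omega⟩ : Fin (k-1))) : Vx k M) = u2 := by
      rcases mem_edg.mp hp1 with h | h
      · exact h
      · exact absurd (blk_row h) hr
    exact pts_ne hk r1 (r1 - u1.1) x1 (hp0'.trans hp1'.symm)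
  have huu : u1 = u2 := by
    have hu1e2 : u1 ∈ edg k M u2 r2 x2 := heq ▸ Finset.mem_insert_self _ _
    rcases mem_edg.mp hu1e2 with h | h
    · exact h
    · exact absurd (blk_row h) (hrr ▸ hu1r)
  have hKK : blk k M r1 (r1 - u1.1) x1 = blk k M r2 (r2 - u2.1) x2 := by
    rw [← erase_edg (x := x1) h1, ← erase_edg (x := x2) h2, heq, huu]
  have hx : x1 = x2 := by
    have h0 : ((r1, x1, (⟨0, by omega⟩ : Fin (k-1))) : Vx k M) ∈ blk k M r2 (r2 - u2.1) x2 :=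
      hKK ▸ pt0_mem hk r1 (r1 - u1.1) x1
    obtain ⟨-, h2⟩ := mem_blk.mp h0
    simpa using h2
  exact ⟨huu, hrr, hx⟩



variable {V : Type*} [DecidableEq V]

lemma head_ne_last_of_nodup {w : List V} (hnd : w.Nodup) (hlen : 2 ≤ w.length) :
    w.head? ≠ w.getLast? := by
  rw [List.head?_eq_getElem?, List.getLast?_eq_getElem?]
  intro h
  have h0 : w[0]? = some (w[0]'(by omega)) := List.getElem?_eq_getElem (by omega)
  have h1 : w[w.length - 1]? = some (w[w.length - 1]'(by omega)) :=
    List.getElem?_eq_getElem (by omega)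
  rw [h0, h1] at h
  have := (List.getElem?_inj (l := w) (i := 0) (j := w.length - 1) (by omega) hnd).mp
    (by rw [h0, h1, h])
  omega

lemma windows_single {k : ℕ} (hk : 2 ≤ k) {e : Finset V} (hcard : e.card = k) :
    windows k e.toList = [e] := by
  have hlen : e.toList.length = k := by rw [Finset.length_toList, hcard]
  rw [windows, hlen]
  have : k + 1 - k = 1 := by omega
  rw [this]
  have hr : List.range 1 = [0] := rfl
  rw [hr]
  simp [List.take_of_length_le (le_of_eq hlen)]

lemma isChain_single {k : ℕ} (hk : 2 ≤ k) {e : Finset V} (hcard : e.card = k) :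
    IsChainSeq k e.toList := by
  have hlen : e.toList.length = k := by rw [Finset.length_toList, hcard]
  refine ⟨by omega, ?_, ?_, ?_⟩
  · exact head_ne_last_of_nodup (Finset.nodup_toList e) (by omega)
  · rw [windows_single hk hcard]
    intro f hf
    rw [List.mem_singleton] at hf
    rw [hf, hcard]
  · rw [windows_single hk hcard]
    exact List.nodup_singleton e

lemma windows_double {k : ℕ} (hk : 2 ≤ k) (u1 u2 : V) (K : Finset V)
    (hK : K.card = k - 1) :
    windows k (u1 :: (K.toList ++ [u2])) = [insert u1 K, insert u2 K] := by
  have hlen : K.toList.length = k - 1 := by rw [Finset.length_toList, hK]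
  have hlen2 : (u1 :: (K.toList ++ [u2])).length = k + 1 := by
    simp [hlen]; omega
  rw [windows, hlen2]
  have h2 : k + 1 + 1 - k = 2 := by omega
  rw [h2]
  have hr : List.range 2 = [0, 1] := rfl
  rw [hr]
  simp only [List.map_cons, List.map_nil, List.drop_zero, List.drop_one]
  congr 1
  · -- take k (u1 :: (l ++ [u2])) = u1 :: l
    obtain ⟨k', rfl⟩ : ∃ k', k = k' + 1 := ⟨k - 1, by omega⟩
    rw [List.take_succ_cons]
    have : k' = K.toList.length := by omega
    rw [this, List.take_left, List.toFinset_cons, Finset.toList_toFinset]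
  · -- take k (tail) with tail = l ++ [u2]
    congr 1
    have htl : (u1 :: (K.toList ++ [u2])).tail = K.toList ++ [u2] := rfl
    rw [htl, List.take_of_length_le (by simp [hlen]; omega), List.toFinset_append]
    ext; simp [or_comm]

lemma isChain_double {k : ℕ} (hk : 2 ≤ k) (u1 u2 : V) (K : Finset V)
    (hK : K.card = k - 1) (h1 : u1 ∉ K) (h2 : u2 ∉ K) (hu : u1 ≠ u2) :
    IsChainSeq k (u1 :: (K.toList ++ [u2])) := by
  have hlen : K.toList.length = k - 1 := by rw [Finset.length_toList, hK]
  have hlen2 : (u1 :: (K.toList ++ [u2])).length = k + 1 := by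
    simp [hlen]; omega
  have hne : insert u1 K ≠ insert u2 K := by
    intro h
    have : u1 ∈ insert u2 K := h ▸ Finset.mem_insert_self u1 K
    rcases Finset.mem_insert.mp this with h' | h'
    · exact hu h'
    · exact h1 h'
  refine ⟨by omega, ?_, ?_, ?_⟩
  · have hh : (u1 :: (K.toList ++ [u2])).head? = some u1 := rfl
    have hl : (u1 :: (K.toList ++ [u2])).getLast? = some u2 := by
      rw [← List.cons_append, List.getLast?_concat]
    rw [hh, hl]
    intro h
    exact hu (Option.some_injective _ h)
  · rw [windows_double hk u1 u2 K hK]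
    intro f hf
    have hcard1 : (insert u1 K).card = k := by
      rw [Finset.card_insert_of_notMem h1, hK]; omega
    have hcard2 : (insert u2 K).card = k := by
      rw [Finset.card_insert_of_notMem h2, hK]; omega
    rcases List.mem_pair.mp hf with rfl | rfl
    · exact hcard1
    · exact hcard2
  · rw [windows_double hk u1 u2 K hK]
    simp [hne]



/-- No three consecutive windows of edges. -/
lemma three_windows_false {k M : ℕ} (hk : 3 ≤ k) {w : List (Vx k M)}
    (hcard : ∀ e ∈ windows k w, e.card = k) (hnd : (windows k w).Nodup)
    (hmem : ∀ e ∈ windows k w, e ∈ EE k M) (hlen : k + 2 ≤ w.length) : False := by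
  have hwl : (windows k w).length = w.length + 1 - k := length_windows k w
  have hW : ∀ i, i < 3 → ((w.drop i).take k).toFinset ∈ windows k w := by
    intro i hi
    exact window_mem_windows i (by omega)
  have hWne : ∀ i j, i < 3 → j < 3 → i ≠ j →
      ((w.drop i).take k).toFinset ≠ ((w.drop j).take k).toFinset := by
    intro i j hi hj hij h
    have gi := windows_getElem? (k := k) (w := w) i (by omega)
    have gj := windows_getElem? (k := k) (w := w) j (by omega)
    have := (List.getElem?_inj (l := windows k w) (i := i) (j := j) (by omega) hnd).mp
      (by rw [gi, gj, h])
    exact hij this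
  have c0 := hcard _ (hW 0 (by omega))
  have c1 := hcard _ (hW 1 (by omega))
  have c2 := hcard _ (hW 2 (by omega))
  obtain ⟨T, eq0, eq1, hT0, hT1, hTm, hne01⟩ :=
    window_step (w := w) (by omega) 0 (by omega) c0 c1
  obtain ⟨T', eq1', eq2, hT0', hT1', hTm', hne12⟩ :=
    window_step (w := w) (by omega) 1 (by omega) c1 c2
  simp only [Nat.zero_add, Nat.add_zero] at eq0 eq1 hT0 hT1 hTm hne01
  -- decompositions
  obtain ⟨uA, rA, xA, adjA, eqA⟩ := mem_EE.mp (hmem _ (hW 0 (by omega)))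
  obtain ⟨uB, rB, xB, adjB, eqB⟩ := mem_EE.mp (hmem _ (hW 1 (by omega)))
  -- step 0 -> 1
  have hbW0 : (w[k]'(by omega)) ∉ ((w.drop 0).take k).toFinset := by
    simp only [eq0]
    intro hmem'
    rcases Finset.mem_insert.mp hmem' with h | h
    · exact hWne 0 1 (by omega) (by omega) (by omega) (by simp only [eq0, eq1, h])
    · exact hT1 h
  have haW0 : (w[0]'(by omega)) ∈ ((w.drop 0).take k).toFinset := by
    simp only [eq0]; exact Finset.mem_insert_self _ _
  have hrel01 : ((w.drop 1).take k).toFinset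
      = insert (w[k]'(by omega)) ((((w.drop 0).take k).toFinset).erase (w[0]'(by omega))) := by
    simp only [eq0, eq1, Finset.erase_insert hT0]
  simp only [eqA] at haW0 hbW0
  simp only [eqA, eqB] at hrel01
  have L1a := L1 hk adjA adjB haW0 hbW0 hrel01
  -- step 1 -> 2
  obtain ⟨-, hbu, -, -, -, -⟩ := L1a
  have haW1 : (w[1]'(by omega)) ∈ ((w.drop 1).take k).toFinset := by
    simp only [eq1]; exact Finset.mem_insert_of_mem hTm
  have hbW1 : (w[1+k]'(by omega)) ∉ ((w.drop 1).take k).toFinset := by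
    simp only [eq1']
    intro hmem'
    rcases Finset.mem_insert.mp hmem' with h | h
    · exact hWne 1 2 (by omega) (by omega) (by omega) (by simp only [eq1', eq2, h])
    · exact hT1' h
  have hrel12 : ((w.drop 2).take k).toFinset
      = insert (w[1+k]'(by omega)) ((((w.drop 1).take k).toFinset).erase (w[1]'(by omega))) := by
    simp only [eq1', eq2, Finset.erase_insert hT0']
  obtain ⟨uC, rC, xC, adjC, eqC⟩ := mem_EE.mp (hmem _ (hW 2 (by omega)))
  simp only [eqB] at haW1 hbW1
  simp only [eqB, eqC] at hrel12
  have L1b := L1 hk adjB adjC haW1 hbW1 hrel12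
  obtain ⟨hau, -, -, -, -, -⟩ := L1b
  -- contradiction : w[1] = uB = w[k], but w[1] ∈ T and w[k] ∉ T
  rw [← hbu] at hau
  rw [hau] at hTm
  exact hT1 hTm

lemma chainsLenLE {k M : ℕ} (hk : 3 ≤ k) : ChainsLenLE k 2 (EE k M) := by
  intro w hc hmem
  obtain ⟨hlen, -, hcard, hnd⟩ := hc
  by_contra h
  exact three_windows_false hk hcard hnd hmem (by omega)

lemma semicycleFree {k M : ℕ} (hk : 3 ≤ k) : SemicycleFree k (EE k M) := by
  rintro ⟨w, ⟨hlen, hhl, hcard, hnd⟩, hmem⟩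
  rcases lt_or_ge w.length (k + 2) with hsmall | hbig
  swap
  · exact three_windows_false hk hcard hnd hmem hbig
  have hhl0 : w.head? = w[0]? := by rw [List.head?_eq_getElem?]
  have hll : w.getLast? = w[w.length - 1]? := by rw [List.getLast?_eq_getElem?]
  have hLcases : w.length = k ∨ w.length = k + 1 := by omega
  rcases hLcases with hL | hL
  · -- length = k
    have c0 := hcard _ (window_mem_windows 0 (by omega))
    have hnd0 : ((w.drop 0).take k).Nodup :=
      window_list_nodup 0 (by omega) c0
    rw [List.drop_zero, List.take_of_length_le (by omega)] at hnd0
    rw [hhl0, hll] at hhl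
    rw [List.getElem?_eq_getElem (by omega), List.getElem?_eq_getElem (by omega)] at hhl
    have := (List.getElem?_inj (l := w) (i := 0) (j := w.length - 1) (by omega) hnd0).mp
      (by
        rw [List.getElem?_eq_getElem (by omega), List.getElem?_eq_getElem (by omega)]
        rw [hhl])
    omega
  · -- length = k + 1
    have c0 := hcard _ (window_mem_windows 0 (by omega))
    have c1 := hcard _ (window_mem_windows 1 (by omega))
    obtain ⟨T, eq0, eq1, hT0, hT1, hTm, hne01⟩ :=
      window_step (w := w) (by omega) 0 (by omega) c0 c1
    simp only [Nat.zero_add] at eq0 eq1 hT0 hT1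
    have h0k : w[0]'(by omega) = w[k]'(by omega) := by
      rw [hhl0, hll] at hhl
      have e0 : w[0]? = some (w[0]'(by omega)) := List.getElem?_eq_getElem (by omega)
      have e1 : w[w.length - 1]? = some (w[k]'(by omega)) := by
        have : w.length - 1 = k := by omega
        rw [this]
        exact List.getElem?_eq_getElem (by omega)
      rw [e0, e1] at hhl
      exact Option.some_injective _ hhl
    have : ((w.drop 0).take k).toFinset = ((w.drop 1).take k).toFinset := by
      simp only [eq0, eq1, h0k]
    have g0 := windows_getElem? (k := k) (w := w) 0 (by omega)
    have g1 := windows_getElem? (k := k) (w := w) 1 (by omega)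
    have := (List.getElem?_inj (l := windows k w) (i := 0) (j := 1)
      (by rw [length_windows]; omega) hnd).mp (by rw [g0, g1, this])
    omega

lemma uniform {k M : ℕ} (hk : 3 ≤ k) : ∀ e ∈ EE k M, e.card = k := by
  intro e he
  obtain ⟨u, r, x, hadj, rfl⟩ := mem_EE.mp he
  exact card_edg k M hk hadj



lemma chainConn {k M : ℕ} (hk : 3 ≤ k) : ChainConn k (EE k M) := by
  intro u _ v _ huv
  rcases eq_or_ne u.1 v.1 with hrow | hrow
  · -- same row : chain of two edges with common kernel
    have hadj_u : Adj M u.1 (u.1 + 1) := adj_succ M u.1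
    have hadj_v : Adj M v.1 (u.1 + 1) := by rw [← hrow]; exact hadj_u
    have hKcard : (blk k M (u.1 + 1) (u.1 + 1 - u.1) 0).card = k - 1 := card_blk k M hk
    have huK : u ∉ blk k M (u.1 + 1) (u.1 + 1 - u.1) 0 := apex_not_mem hadj_u
    have hvK : v ∉ blk k M (u.1 + 1) (u.1 + 1 - u.1) 0 :=
      apex_not_mem_blk (by rw [← hrow]; exact adj_irrefl hadj_u)
    refine ⟨u :: ((blk k M (u.1 + 1) (u.1 + 1 - u.1) 0).toList ++ [v]),
      isChain_double (by omega) u v _ hKcard huK hvK huv, ?_, List.mem_cons_self,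
      List.mem_cons_of_mem _ (List.mem_append_right _ (List.mem_singleton_self v))⟩
    rw [windows_double (by omega) u v _ hKcard]
    intro f hf
    rcases List.mem_pair.mp hf with rfl | rfl
    · exact mem_EE.mpr ⟨u, u.1 + 1, 0, hadj_u, rfl⟩
    · refine mem_EE.mpr ⟨v, u.1 + 1, 0, hadj_v, ?_⟩
      rw [edg, hrow]
  · rcases adj_total hrow with hadj | hadj
    · -- u is apex, v in kernel
      have hv : v ∈ blk k M v.1 (v.1 - u.1)
          (v.2.1 - ((v.2.2 : ℕ) : ZMod (Rr M)) * (v.1 - u.1)) :=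
        mem_blk.mpr ⟨rfl, by ring⟩
      have hcard := card_edg k M (x := v.2.1 - ((v.2.2 : ℕ) : ZMod (Rr M)) * (v.1 - u.1)) hk hadj
      refine ⟨(edg k M u v.1 (v.2.1 - ((v.2.2 : ℕ) : ZMod (Rr M)) * (v.1 - u.1))).toList,
        isChain_single (by omega) hcard, ?_,
        Finset.mem_toList.mpr (Finset.mem_insert_self _ _),
        Finset.mem_toList.mpr (Finset.mem_insert_of_mem hv)⟩
      rw [windows_single (by omega) hcard]
      intro f hf
      rw [List.mem_singleton] at hf
      rw [hf]
      exact mem_EE.mpr ⟨u, v.1, _, hadj, rfl⟩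
    · -- v is apex, u in kernel
      have hu : u ∈ blk k M u.1 (u.1 - v.1)
          (u.2.1 - ((u.2.2 : ℕ) : ZMod (Rr M)) * (u.1 - v.1)) :=
        mem_blk.mpr ⟨rfl, by ring⟩
      have hcard := card_edg k M (x := u.2.1 - ((u.2.2 : ℕ) : ZMod (Rr M)) * (u.1 - v.1)) hk hadj
      refine ⟨(edg k M v u.1 (u.2.1 - ((u.2.2 : ℕ) : ZMod (Rr M)) * (u.1 - v.1))).toList,
        isChain_single (by omega) hcard, ?_,
        Finset.mem_toList.mpr (Finset.mem_insert_of_mem hu),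
        Finset.mem_toList.mpr (Finset.mem_insert_self _ _)⟩
      rw [windows_single (by omega) hcard]
      intro f hf
      rw [List.mem_singleton] at hf
      rw [hf]
      exact mem_EE.mpr ⟨v, u.1, _, hadj, rfl⟩

/-- an edge of `EE` containing both the apex `u` and the base point of the kernel of
`edg u r x` must be `edg u r x` itself. -/
lemma cover_edge_eq {k M : ℕ} (hk : 3 ≤ k) {u : Vx k M} {r x : ZMod (Rr M)}
    (hadj : Adj M u.1 r) {u' : Vx k M} {r' x' : ZMod (Rr M)} (hadj' : Adj M u'.1 r')
    (hu : u ∈ edg k M u' r' x')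
    (hv0 : ((r, x, (⟨0, by omega⟩ : Fin (k-1))) : Vx k M) ∈ edg k M u' r' x') :
    edg k M u' r' x' = edg k M u r x := by
  rcases mem_edg.mp hv0 with hv | hv
  · -- v0 is the apex u'
    have hu'r : u'.1 = r := by rw [← hv]
    rcases mem_edg.mp hu with h | h
    · exfalso
      rw [h, hu'r] at hadj
      exact adj_irrefl hadj rfl
    · exfalso
      have hur' : u.1 = r' := blk_row h
      rw [hu'r] at hadj'
      rw [hur'] at hadj
      exact adj_asymm hadj hadj'
  · -- v0 in the kernel, so r' = r
    have hrr : r' = r := (blk_row hv).symm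
    rcases mem_edg.mp hu with h | h
    · -- u = u'
      subst h
      have hx : x' = x := by
        rw [hrr] at hv
        exact blk_base_eq hv (pt0_mem hk r (r - u.1) x)
      rw [hrr, hx]
    · exfalso
      have : u.1 = r' := blk_row h
      rw [this, hrr] at hadj
      exact adj_irrefl hadj rfl

lemma edgeMinimal {k M : ℕ} (hk : 3 ≤ k) : EdgeMinimal k (EE k M) := by
  intro e he hconn
  obtain ⟨u, r, x, hadj, rfl⟩ := mem_EE.mp he
  have hv0K : ((r, x, (⟨0, by omega⟩ : Fin (k-1))) : Vx k M) ∈ blk k M r (r - u.1) x :=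
    pt0_mem hk r (r - u.1) x
  have hne : u ≠ ((r, x, (⟨0, by omega⟩ : Fin (k-1))) : Vx k M) := by
    intro h
    have : u.1 = r := by rw [h]
    exact adj_irrefl hadj this
  obtain ⟨w, hchain, hwin, hu, hv⟩ :=
    hconn u (Finset.mem_univ _) ((r, x, ⟨0, by omega⟩)) (Finset.mem_univ _) hne
  obtain ⟨hlen, hhg, hcard, hnd⟩ := hchain
  have hwinE : ∀ f ∈ windows k w, f ∈ EE k M :=
    fun f hf => Finset.mem_of_mem_erase (hwin f hf)
  have hwne : ∀ f ∈ windows k w, f ≠ edg k M u r x :=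
    fun f hf => Finset.ne_of_mem_erase (hwin f hf)
  have hlen2 : w.length ≤ k + 1 := by
    by_contra h
    exact three_windows_false hk hcard hnd hwinE (by omega)
  obtain ⟨iu, hiu, huW⟩ := mem_window_of_mem hlen (by omega) hu
  obtain ⟨iv, hiv, hvW⟩ := mem_window_of_mem hlen (by omega) hv
  rcases (by omega : w.length = k ∨ w.length = k + 1) with hL | hL
  · -- a single window
    have hiu0 : iu = 0 := by omega
    have hiv0 : iv = 0 := by omega
    rw [hiu0] at huW
    rw [hiv0] at hvW
    obtain ⟨u', r', x', hadj', heq'⟩ := mem_EE.mp (hwinE _ (window_mem_windows 0 (by omega)))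
    rw [heq'] at huW hvW
    exact hwne _ (window_mem_windows 0 (by omega))
      (heq'.trans (cover_edge_eq hk hadj hadj' huW hvW))
  · -- two windows
    have c0 := hcard _ (window_mem_windows 0 (by omega))
    have c1 := hcard _ (window_mem_windows 1 (by omega))
    obtain ⟨T, eq0, eq1, hT0, hT1, hTm, hne01⟩ :=
      window_step (w := w) (by omega) 0 (by omega) c0 c1
    simp only [Nat.zero_add] at eq0 eq1 hT0 hT1 hTm hne01
    obtain ⟨uA, rA, xA, adjA, eqA⟩ := mem_EE.mp (hwinE _ (window_mem_windows 0 (by omega)))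
    obtain ⟨uB, rB, xB, adjB, eqB⟩ := mem_EE.mp (hwinE _ (window_mem_windows 1 (by omega)))
    have hbW0 : (w[k]'(by omega)) ∉ ((w.drop 0).take k).toFinset := by
      simp only [eq0]
      intro hmem'
      rcases Finset.mem_insert.mp hmem' with h | h
      · have g0 := windows_getElem? (k := k) (w := w) 0 (by rw [hL]; omega)
        have g1 := windows_getElem? (k := k) (w := w) 1 (by rw [hL]; omega)
        have h01 := (List.getElem?_inj (l := windows k w) (i := 0) (j := 1)
          (by rw [length_windows]; omega) hnd).mp
          (by rw [g0, g1]; congr 1; simp only [eq0, eq1, h])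
        omega
      · exact hT1 h
    have haW0 : (w[0]'(by omega)) ∈ ((w.drop 0).take k).toFinset := by
      simp only [eq0]; exact Finset.mem_insert_self _ _
    have hrel01 : ((w.drop 1).take k).toFinset
        = insert (w[k]'(by omega))
          ((((w.drop 0).take k).toFinset).erase (w[0]'(by omega))) := by
      simp only [eq0, eq1, Finset.erase_insert hT0]
    simp only [eqA] at haW0 hbW0
    simp only [eqA, eqB] at hrel01
    obtain ⟨-, -, hrAB, hKK, hrowAB, -⟩ := L1 hk adjA adjB haW0 hbW0 hrel01
    -- membership case analysis
    have hcases : ∀ z : Vx k M, z ∈ w →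
        z = uA ∨ z = uB ∨ z ∈ blk k M rA (rA - uA.1) xA := by
      intro z hz
      obtain ⟨i, hi, hzW⟩ := mem_window_of_mem hlen (by omega) hz
      have hi2 : i = 0 ∨ i = 1 := by
        rw [hL] at hi; omega
      rcases hi2 with rfl | rfl
      · rw [eqA] at hzW
        rcases mem_edg.mp hzW with h | h
        · exact Or.inl h
        · exact Or.inr (Or.inr h)
      · rw [eqB] at hzW
        rcases mem_edg.mp hzW with h | h
        · exact Or.inr (Or.inl h)
        · exact Or.inr (Or.inr (hKK ▸ h))
    have huc := hcases u hu
    have hvc := hcases _ hv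
    -- kernel membership facts
    have hv0r : ((r, x, (⟨0, by omega⟩ : Fin (k-1))) : Vx k M).1 = r := rfl
    have hur : u.1 ≠ r := adj_irrefl hadj
    rcases hvc with hv1 | hv1 | hv1
    · -- v0 = uA : apex row is r
      have hArow : uA.1 = r := by rw [← hv1]
      rcases huc with h | h | h
      · rw [h, hArow] at hur; exact hur rfl
      · rw [h, ← hrowAB, hArow] at hur; exact hur rfl
      · -- u in kernel : Adj r u.1 and Adj u.1 r
        have : u.1 = rA := blk_row h
        rw [hArow] at adjA
        rw [this] at hadj
        exact adj_asymm hadj adjA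
    · -- v0 = uB : apex row is r (same row as uA)
      have hArow : uA.1 = r := by rw [hrowAB, ← hv1]
      rcases huc with h | h | h
      · rw [h, hArow] at hur; exact hur rfl
      · rw [h, ← hrowAB, hArow] at hur; exact hur rfl
      · have : u.1 = rA := blk_row h
        rw [hArow] at adjA
        rw [this] at hadj
        exact adj_asymm hadj adjA
    · -- v0 in the kernel
      rcases huc with h | h | h
      · -- u = uA : window 0 = the deleted edge
        apply hwne _ (window_mem_windows 0 (by omega))
        rw [eqA]
        refine cover_edge_eq hk hadj adjA ?_ ?_
        · rw [h]; exact Finset.mem_insert_self _ _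
        · exact Finset.mem_insert_of_mem hv1
      · -- u = uB : window 1 = the deleted edge
        apply hwne _ (window_mem_windows 1 (by omega))
        rw [eqB]
        refine cover_edge_eq hk hadj adjB ?_ ?_
        · rw [h]; exact Finset.mem_insert_self _ _
        · exact Finset.mem_insert_of_mem (hKK ▸ hv1)
      · -- u in the kernel : rows clash
        have h1 : u.1 = rA := blk_row h
        have h2 : rA = r := by rw [← blk_row hv1]
        rw [h1, h2] at hur
        exact hur rfl


section Transfer

variable {V W : Type*} [DecidableEq V] [DecidableEq W]

lemma toFinset_map (f : V → W) (l : List V) : (l.map f).toFinset = l.toFinset.image f := by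
  induction l with
  | nil => simp
  | cons a l ih => simp [ih]

variable (σ : V ≃ W)

lemma windows_map (kk : ℕ) (w : List V) :
    windows kk (w.map σ) = (windows kk w).map (Finset.image σ) := by
  rw [windows, windows, List.length_map, List.map_map]
  apply List.map_congr_left
  intro i _
  simp only [Function.comp_apply]
  rw [← List.map_drop, ← List.map_take, toFinset_map]

lemma isChainSeq_map {kk : ℕ} {w : List V} :
    IsChainSeq kk (w.map σ) ↔ IsChainSeq kk w := by
  rw [IsChainSeq, IsChainSeq, List.length_map, List.head?_map, List.getLast?_map,
    windows_map]
  have himg : Function.Injective (Finset.image σ) := Finset.image_injective σ.injective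
  constructor
  · rintro ⟨h1, h2, h3, h4⟩
    refine ⟨h1, fun h => h2 (by rw [h]), fun e he => ?_, (List.nodup_map_iff himg).mp h4⟩
    have := h3 _ (List.mem_map_of_mem (f := Finset.image σ) he)
    rwa [Finset.card_image_of_injective _ σ.injective] at this
  · rintro ⟨h1, h2, h3, h4⟩
    refine ⟨h1, fun h => h2 (Option.map_injective σ.injective h), fun e he => ?_,
      (List.nodup_map_iff himg).mpr h4⟩
    obtain ⟨e0, he0, rfl⟩ := List.mem_map.mp he
    rw [Finset.card_image_of_injective _ σ.injective]
    exact h3 _ he0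

lemma isSemicycleSeq_map {kk : ℕ} {w : List V} :
    IsSemicycleSeq kk (w.map σ) ↔ IsSemicycleSeq kk w := by
  rw [IsSemicycleSeq, IsSemicycleSeq, List.length_map, List.head?_map, List.getLast?_map,
    windows_map]
  have himg : Function.Injective (Finset.image σ) := Finset.image_injective σ.injective
  constructor
  · rintro ⟨h1, h2, h3, h4⟩
    refine ⟨h1, Option.map_injective σ.injective h2, fun e he => ?_,
      (List.nodup_map_iff himg).mp h4⟩
    have := h3 _ (List.mem_map_of_mem (f := Finset.image σ) he)
    rwa [Finset.card_image_of_injective _ σ.injective] at this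
  · rintro ⟨h1, h2, h3, h4⟩
    refine ⟨h1, by rw [h2], fun e he => ?_, (List.nodup_map_iff himg).mpr h4⟩
    obtain ⟨e0, he0, rfl⟩ := List.mem_map.mp he
    rw [Finset.card_image_of_injective _ σ.injective]
    exact h3 _ he0

lemma map_symm_map (w' : List W) : (w'.map σ.symm).map σ = w' := by
  rw [List.map_map]
  simp

variable [Fintype V] [Fintype W]

lemma transfer_uniform {kk : ℕ} (E : Finset (Finset V)) (h : ∀ e ∈ E, e.card = kk) :
    ∀ e ∈ E.image (Finset.image σ), e.card = kk := by
  intro e he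
  obtain ⟨e0, he0, rfl⟩ := Finset.mem_image.mp he
  rw [Finset.card_image_of_injective _ σ.injective]
  exact h e0 he0

lemma transfer_chainConn {kk : ℕ} (E : Finset (Finset V)) (h : ChainConn kk E) :
    ChainConn kk (E.image (Finset.image σ)) := by
  intro u' _ v' _ hne
  obtain ⟨w, hchain, hwin, hu, hv⟩ := h (σ.symm u') (Finset.mem_univ _) (σ.symm v')
    (Finset.mem_univ _) (fun hh => hne (by
      have := congrArg σ hh
      simpa using this))
  refine ⟨w.map σ, (isChainSeq_map σ).mpr hchain, ?_, ?_, ?_⟩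
  · intro e he
    rw [windows_map] at he
    obtain ⟨e0, he0, rfl⟩ := List.mem_map.mp he
    exact Finset.mem_image_of_mem _ (hwin e0 he0)
  · have := List.mem_map_of_mem (f := σ) hu
    simpa using this
  · have := List.mem_map_of_mem (f := σ) hv
    simpa using this

lemma transfer_semicycleFree {kk : ℕ} (E : Finset (Finset V)) (h : SemicycleFree kk E) :
    SemicycleFree kk (E.image (Finset.image σ)) := by
  rintro ⟨w', hsc, hmem⟩
  apply h
  refine ⟨w'.map σ.symm, ?_, ?_⟩
  · rw [← isSemicycleSeq_map σ, map_symm_map]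
    exact hsc
  · intro e he
    have he' : Finset.image σ e ∈ windows kk w' := by
      rw [← map_symm_map σ w', windows_map]
      exact List.mem_map_of_mem he
    obtain ⟨e0, he0, heq⟩ := Finset.mem_image.mp (hmem _ he')
    rwa [← Finset.image_injective σ.injective heq]

lemma transfer_chainsLenLE {kk l : ℕ} (E : Finset (Finset V)) (h : ChainsLenLE kk l E) :
    ChainsLenLE kk l (E.image (Finset.image σ)) := by
  intro w' hchain hmem
  have hlen : (w'.map σ.symm).length = w'.length := List.length_map _
  rw [← hlen]
  apply h
  · rw [← isChainSeq_map σ, map_symm_map]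
    exact hchain
  · intro e he
    have he' : Finset.image σ e ∈ windows kk w' := by
      rw [← map_symm_map σ w', windows_map]
      exact List.mem_map_of_mem he
    obtain ⟨e0, he0, heq⟩ := Finset.mem_image.mp (hmem _ he')
    rwa [← Finset.image_injective σ.injective heq]

lemma transfer_edgeMinimal {kk : ℕ} (E : Finset (Finset V)) (h : EdgeMinimal kk E) :
    EdgeMinimal kk (E.image (Finset.image σ)) := by
  intro e' he' hconn
  obtain ⟨e, he, rfl⟩ := Finset.mem_image.mp he'
  apply h e he
  intro u _ v _ hne
  obtain ⟨w', hchain, hwin, hu, hv⟩ := hconn (σ u) (Finset.mem_univ _) (σ v)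
    (Finset.mem_univ _) (fun hh => hne (σ.injective hh))
  refine ⟨w'.map σ.symm, ?_, ?_, ?_, ?_⟩
  · rw [← isChainSeq_map σ, map_symm_map]
    exact hchain
  · intro f hf
    have hf' : Finset.image σ f ∈ windows kk w' := by
      rw [← map_symm_map σ w', windows_map]
      exact List.mem_map_of_mem hf
    have hmem := hwin _ hf'
    have hfE : f ∈ E := by
      obtain ⟨e0, he0, heq⟩ := Finset.mem_image.mp (Finset.mem_of_mem_erase hmem)
      rwa [← Finset.image_injective σ.injective heq]
    refine Finset.mem_erase.mpr ⟨?_, hfE⟩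
    intro hfe
    exact (Finset.ne_of_mem_erase hmem) (by rw [hfe])
  · have := List.mem_map_of_mem (f := σ.symm) hu
    simpa using this
  · have := List.mem_map_of_mem (f := σ.symm) hv
    simpa using this

end Transfer

/-- cardinality of the edge set -/
lemma card_EE {k M : ℕ} (hk : 3 ≤ k) :
    (EE k M).card = (M+1) * (2*M+3)^3 * (k-1) := by
  rw [EE, Finset.card_image_of_injOn]
  · rw [PP, Finset.card_product, Finset.card_product, Finset.card_univ, Finset.card_univ,
      Nat.card_Icc, Fintype.card_prod, Fintype.card_prod, ZMod.card, Fintype.card_fin]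
    show (2*M+3) * ((2*M+3) * (k-1)) * ((M + 1 + 1 - 1) * (2*M+3)) = _
    have h11 : M + 1 + 1 - 1 = M + 1 := by omega
    rw [h11]
    ring
  · rintro ⟨u1, d1, x1⟩ h1 ⟨u2, d2, x2⟩ h2 heq
    simp only [PP, Finset.coe_product, Set.mem_prod, Finset.mem_coe, Finset.mem_Icc,
      Finset.mem_univ, true_and, Set.mem_univ, and_true] at h1 h2
    have adj1 : Adj M u1.1 (u1.1 + ((d1 : ℕ) : ZMod (Rr M))) :=
      adj_iff.mpr ⟨d1, h1.1, h1.2, rfl⟩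
    have adj2 : Adj M u2.1 (u2.1 + ((d2 : ℕ) : ZMod (Rr M))) :=
      adj_iff.mpr ⟨d2, h2.1, h2.2, rfl⟩
    have heq' : edg k M u1 (u1.1 + ((d1 : ℕ) : ZMod (Rr M))) x1
        = edg k M u2 (u2.1 + ((d2 : ℕ) : ZMod (Rr M))) x2 := heq
    obtain ⟨huu, hrr, hxx⟩ := edg_inj hk adj1 adj2 heq' 
    have hdz : ((d1 : ℕ) : ZMod (Rr M)) = ((d2 : ℕ) : ZMod (Rr M)) := by
      rw [huu] at hrr
      exact add_left_cancel hrr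
    have hd : d1 = d2 := by
      have v1 : ((d1 : ℕ) : ZMod (Rr M)).val = d1 := ZMod.val_cast_of_lt (by
        show d1 < 2*M+3; omega)
      have v2 : ((d2 : ℕ) : ZMod (Rr M)).val = d2 := ZMod.val_cast_of_lt (by
        show d2 < 2*M+3; omega)
      rw [← v1, ← v2, hdz]
    rw [huu, hd, hxx]



theorem stmt14_aux (k : ℕ) (hk : 3 ≤ k) : ∃ n e : ℕ → ℕ, StrictMono n ∧
    (∀ m, ∃ E : Finset (Finset (Fin (n m))),
      IsLHypertree k 2 E ∧ EdgeMinimal k E ∧ E.card = e m) ∧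
    Filter.Tendsto (fun m => (e m : ℝ) / ((n m).choose 2 : ℝ))
      Filter.atTop (nhds (1 / ((k : ℝ) - 1))) := by
  have hq2 : (2:ℝ) ≤ (k:ℝ) - 1 := by
    have : (3:ℝ) ≤ (k:ℝ) := by exact_mod_cast hk
    linarith
  refine ⟨fun M => (2*M+3)^2 * (k-1), fun M => (M+1) * (2*M+3)^3 * (k-1), ?_, ?_, ?_⟩
  · -- strict monotonicity
    intro a b hab
    have h1 : (2*a+3)^2 < (2*b+3)^2 := Nat.pow_lt_pow_left (by omega) (by omega)
    have hk1 : 0 < k - 1 := by omega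
    exact (Nat.mul_lt_mul_right hk1).mpr h1
  · -- the hypertrees
    intro M
    have hcardV : Fintype.card (Vx k M) = (2*M+3)^2 * (k-1) := by
      rw [Fintype.card_prod, Fintype.card_prod, ZMod.card, Fintype.card_fin]
      show (2*M+3) * ((2*M+3) * (k-1)) = _
      ring
    let σ : Vx k M ≃ Fin ((2*M+3)^2 * (k-1)) := Fintype.equivFinOfCardEq hcardV
    refine ⟨(EE k M).image (Finset.image σ), ⟨⟨?_, ?_, ?_⟩, ?_⟩, ?_, ?_⟩
    · exact transfer_uniform σ _ (uniform hk)
    · exact transfer_chainConn σ _ (chainConn hk)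
    · exact transfer_semicycleFree σ _ (semicycleFree hk)
    · exact transfer_chainsLenLE σ _ (chainsLenLE hk)
    · exact transfer_edgeMinimal σ _ (edgeMinimal hk)
    · rw [Finset.card_image_of_injective _ (Finset.image_injective σ.injective)]
      exact card_EE hk
  · -- the asymptotics
    have hfun : ∀ M : ℕ, 1 ≤ M →
        ((2+2*(1/(M:ℝ)))*(2+3*(1/(M:ℝ)))) /
          ((2+3*(1/(M:ℝ)))^2*((k:ℝ)-1) - (1/(M:ℝ))*(1/(M:ℝ)))
        = (((M+1) * (2*M+3)^3 * (k-1) : ℕ) : ℝ) / ((((2*M+3)^2 * (k-1) : ℕ)).choose 2 : ℝ) := by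
      intro M hM
      have hMR : (1:ℝ) ≤ (M:ℝ) := by exact_mod_cast hM
      have hM0 : (M:ℝ) ≠ 0 := by linarith
      have hnn : (((2*M+3)^2*(k-1) : ℕ) : ℝ) = (2*(M:ℝ)+3)^2 * ((k:ℝ)-1) := by
        rw [Nat.cast_mul, Nat.cast_pow, Nat.cast_sub (by omega : 1 ≤ k)]
        push_cast
        ring
      have hch : ((((2*M+3)^2*(k-1) : ℕ)).choose 2 : ℝ)
          = ((2*(M:ℝ)+3)^2*((k:ℝ)-1)) * ((2*(M:ℝ)+3)^2*((k:ℝ)-1) - 1) / 2 := by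
        rw [Nat.cast_choose_two, hnn]
      have hee : (((M+1) * (2*M+3)^3 * (k-1) : ℕ) : ℝ)
          = ((M:ℝ)+1) * (2*(M:ℝ)+3)^3 * ((k:ℝ)-1) := by
        rw [Nat.cast_mul, Nat.cast_mul, Nat.cast_pow, Nat.cast_sub (by omega : 1 ≤ k)]
        push_cast
        ring
      rw [hee, hch]
      have hrq : (0:ℝ) < (2*(M:ℝ)+3)^2*((k:ℝ)-1) := by nlinarith
      have hd1 : (0:ℝ) < (2*(M:ℝ)+3)^2*((k:ℝ)-1) - 1 := by nlinarith
      have hd1' : (2*(M:ℝ)+3)^2*((k:ℝ)-1) - 1 ≠ 0 := ne_of_gt hd1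
      have hrq' : (2*(M:ℝ)+3)^2*((k:ℝ)-1) ≠ 0 := ne_of_gt hrq
      have hd2 : (2+3*(1/(M:ℝ)))^2*((k:ℝ)-1) - (1/(M:ℝ))*(1/(M:ℝ)) ≠ 0 := by
        have heq2 : (2+3*(1/(M:ℝ)))^2*((k:ℝ)-1) - (1/(M:ℝ))*(1/(M:ℝ))
            = ((2*(M:ℝ)+3)^2*((k:ℝ)-1) - 1)/(M:ℝ)^2 := by
          field_simp
        rw [heq2]
        exact div_ne_zero hd1' (pow_ne_zero _ hM0)
      have hchne : (2*(M:ℝ)+3)^2*((k:ℝ)-1) * ((2*(M:ℝ)+3)^2*((k:ℝ)-1) - 1) / 2 ≠ 0 := by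
        apply div_ne_zero (mul_ne_zero hrq' hd1')
        norm_num
      rw [div_eq_div_iff hd2 hchne]
      field_simp
    have h0 : Filter.Tendsto (fun M : ℕ => 1/(M:ℝ)) Filter.atTop (nhds 0) :=
      tendsto_one_div_atTop_nhds_zero_nat
    have hnum : Filter.Tendsto (fun M : ℕ => (2+2*(1/(M:ℝ)))*(2+3*(1/(M:ℝ))))
        Filter.atTop (nhds ((2+2*0)*(2+3*0))) :=
      (tendsto_const_nhds.add (h0.const_mul 2)).mul
        (tendsto_const_nhds.add (h0.const_mul 3))
    have hden : Filter.Tendsto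
        (fun M : ℕ => (2+3*(1/(M:ℝ)))^2*((k:ℝ)-1) - (1/(M:ℝ))*(1/(M:ℝ)))
        Filter.atTop (nhds ((2+3*0)^2*((k:ℝ)-1) - 0*0)) :=
      (((tendsto_const_nhds.add (h0.const_mul 3)).pow 2).mul_const _).sub (h0.mul h0)
    have hdne : ((2+3*(0:ℝ))^2*((k:ℝ)-1) - 0*0) ≠ 0 := by
      have : (0:ℝ) < (2+3*(0:ℝ))^2*((k:ℝ)-1) - 0*0 := by nlinarith
      exact ne_of_gt this
    have hdiv := hnum.div hden hdne
    have hval : ((2+2*(0:ℝ))*(2+3*0)) / ((2+3*(0:ℝ))^2*((k:ℝ)-1) - 0*0) = 1/((k:ℝ)-1) := by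
      rw [show (2+2*(0:ℝ))*(2+3*0) = 4 by norm_num,
        show ((2+3*(0:ℝ))^2*((k:ℝ)-1) - 0*0) = 4*((k:ℝ)-1) by ring]
      rw [div_eq_div_iff (by linarith : (0:ℝ) < 4*((k:ℝ)-1)).ne' (by linarith : ((k:ℝ)-1) ≠ 0)]
      ring
    rw [hval] at hdiv
    refine Filter.Tendsto.congr' ?_ hdiv
    rw [Filter.eventuallyEq_iff_exists_mem]
    exact ⟨{M | 1 ≤ M}, Filter.eventually_atTop.mpr ⟨1, fun M hM => hM⟩,
      fun M hM => hfun M hM⟩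

end S14

/-- for `k ≥ 3` there is an infinite sequence of `k`-uniform
edge-minimal (2-)hypertrees with `n_m` strictly increasing and
`e_m ∼ (1/(k-1))·C(n_m, 2)`. -/
theorem stmt14 (k : ℕ) (hk : 3 ≤ k) : ∃ n e : ℕ → ℕ, StrictMono n ∧
    (∀ m, ∃ E : Finset (Finset (Fin (n m))),
      IsLHypertree k 2 E ∧ EdgeMinimal k E ∧ E.card = e m) ∧
    Filter.Tendsto (fun m => (e m : ℝ) / ((n m).choose 2 : ℝ))
      Filter.atTop (nhds (1 / ((k : ℝ) - 1))) := S14.stmt14_aux k hk
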